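/- In a flip automata network, if two finite sequential update schedules consist of applicable-node updates and the multisets of updated nodes are equal, then the resulting configurations are equal. -/

import Mathlib

open scoped Classical

/-- A flip automata network. -/
structure FAN (I S : Type*) where
  G : SimpleGraph I
  flip : I → (I → S) → S × (I → Bool)

abbrev FanConfig (I S : Type*) := (I → S) × (I → I → Bool)

def FAN.Applicable {I S : Type*} (net : FAN I S) (cfg : FanConfig I S) (v : I) : Prop :=
  ∀ u, net.G.Adj u v → cfg.2 u v = true

noncomputable def FAN.updateSet {I S : Type*} (net : FAN I S) (D : Set I)
    (cfg : FanConfig I S) : FanConfig I S :=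
  ( fun i => if i ∈ D then (net.flip i cfg.1).1 else cfg.1 i,
    fun i j =>
      if (i ∈ D ∧ (net.flip i cfg.1).2 j = true) ∨ (j ∈ D ∧ (net.flip j cfg.1).2 i = true)
      then !(cfg.2 i j) else cfg.2 i j )

/-- A sequential update schedule (a list of nodes) is valid if each listed node is
applicable at the moment it is updated. -/
def FAN.ValidSeq {I S : Type*} (net : FAN I S) : FanConfig I S → List I → Prop
  | _, [] => True
  | cfg, v :: l => net.Applicable cfg v ∧ FAN.ValidSeq net (net.updateSet {v} cfg) l

/-- Run a finite sequential update schedule. -/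
noncomputable def FAN.run {I S : Type*} (net : FAN I S) (l : List I)
    (cfg : FanConfig I S) : FanConfig I S :=
  l.foldl (fun c v => net.updateSet {v} c) cfg

namespace FAN

variable {I S : Type*} {net : FAN I S}

lemma updateSet_fst (D : Set I) (cfg : FanConfig I S) (i : I) :
    (net.updateSet D cfg).1 i = if i ∈ D then (net.flip i cfg.1).1 else cfg.1 i := rfl

lemma updateSet_snd (D : Set I) (cfg : FanConfig I S) (i j : I) :
    (net.updateSet D cfg).2 i j =
      if (i ∈ D ∧ (net.flip i cfg.1).2 j = true) ∨ (j ∈ D ∧ (net.flip j cfg.1).2 i = true)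
      then !(cfg.2 i j) else cfg.2 i j := rfl

lemma updateSet_snd' (v : I) (cfg : FanConfig I S) (i j : I) :
    (net.updateSet {v} cfg).2 i j =
      if (i = v ∧ (net.flip v cfg.1).2 j = true) ∨ (j = v ∧ (net.flip v cfg.1).2 i = true)
      then !(cfg.2 i j) else cfg.2 i j := by
  rw [updateSet_snd]
  apply if_congr _ rfl rfl
  simp only [Set.mem_singleton_iff]
  constructor <;> rintro (⟨rfl, hb⟩ | ⟨rfl, hb⟩)
  exacts [Or.inl ⟨rfl, hb⟩, Or.inr ⟨rfl, hb⟩, Or.inl ⟨rfl, hb⟩, Or.inr ⟨rfl, hb⟩]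

lemma run_nil (cfg : FanConfig I S) : net.run [] cfg = cfg := rfl

lemma run_cons (v : I) (t : List I) (cfg : FanConfig I S) :
    net.run (v :: t) cfg = net.run t (net.updateSet {v} cfg) := rfl

lemma run_append (a b : List I) (cfg : FanConfig I S) :
    net.run (a ++ b) cfg = net.run b (net.run a cfg) :=
  List.foldl_append

lemma validSeq_append (a b : List I) (cfg : FanConfig I S) :
    net.ValidSeq cfg (a ++ b) ↔ net.ValidSeq cfg a ∧ net.ValidSeq (net.run a cfg) b := by
  induction a generalizing cfg with
  | nil => simp [ValidSeq, run_nil]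
  | cons v t ih =>
      simp only [List.cons_append, ValidSeq, run_cons, List.append_eq, ih, and_assoc]

lemma hor_update (v : I) (cfg : FanConfig I S)
    (hor : ∀ i j, net.G.Adj i j → cfg.2 i j = !cfg.2 j i) :
    ∀ i j, net.G.Adj i j →
      (net.updateSet {v} cfg).2 i j = !(net.updateSet {v} cfg).2 j i := by
  intro i j hadj
  rw [updateSet_snd, updateSet_snd]
  by_cases h : (i ∈ ({v} : Set I) ∧ (net.flip i cfg.1).2 j = true) ∨
      (j ∈ ({v} : Set I) ∧ (net.flip j cfg.1).2 i = true)
  · rw [if_pos h, if_pos (or_comm.mp h), hor i j hadj, Bool.not_not]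
  · rw [if_neg h, if_neg (fun hh => h (or_comm.mp hh)), hor i j hadj]

lemma not_adj_of_app {cfg : FanConfig I S}
    (hor : ∀ i j, net.G.Adj i j → cfg.2 i j = !cfg.2 j i) {v w : I}
    (hv : net.Applicable cfg v) (hw : net.Applicable cfg w) : ¬ net.G.Adj v w := by
  intro hadj
  have h1 := hw v hadj
  have h2 := hv w hadj.symm
  rw [hor v w hadj, h2] at h1
  simp at h1

lemma flip_update
    (hloc : ∀ i (s s' : I → S), s i = s' i → (∀ u, net.G.Adj u i → s u = s' u) →
      net.flip i s = net.flip i s')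
    {v w : I} (hne : w ≠ v) (hadj : ¬ net.G.Adj v w) (cfg : FanConfig I S) :
    net.flip w (net.updateSet {v} cfg).1 = net.flip w cfg.1 := by
  apply hloc
  · rw [updateSet_fst]; simp [hne]
  · intro u hu
    rw [updateSet_fst]
    have huv : u ≠ v := fun h => hadj (h ▸ hu)
    simp [huv]

lemma app_update {v w : I} (hne : w ≠ v) (hadj : ¬ net.G.Adj v w)
    (cfg : FanConfig I S) (hw : net.Applicable cfg w) :
    net.Applicable (net.updateSet {v} cfg) w := by
  intro u hu
  rw [updateSet_snd, if_neg, hw u hu]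
  simp only [Set.mem_singleton_iff]
  rintro (⟨h, -⟩ | ⟨h, -⟩)
  · exact hadj (h ▸ hu)
  · exact hne h

lemma update_comm
    (hloc : ∀ i (s s' : I → S), s i = s' i → (∀ u, net.G.Adj u i → s u = s' u) →
      net.flip i s = net.flip i s')
    {cfg : FanConfig I S}
    (hor : ∀ i j, net.G.Adj i j → cfg.2 i j = !cfg.2 j i) {v w : I}
    (hv : net.Applicable cfg v) (hw : net.Applicable cfg w) (hne : v ≠ w) :
    net.updateSet {w} (net.updateSet {v} cfg) =
      net.updateSet {v} (net.updateSet {w} cfg) := by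
  have hvw : ¬ net.G.Adj v w := not_adj_of_app hor hv hw
  have hwv : ¬ net.G.Adj w v := fun h => hvw h.symm
  have fw : net.flip w (net.updateSet {v} cfg).1 = net.flip w cfg.1 :=
    flip_update hloc hne.symm hvw cfg
  have fv : net.flip v (net.updateSet {w} cfg).1 = net.flip v cfg.1 :=
    flip_update hloc hne hwv cfg
  refine Prod.ext (funext fun i => ?_) (funext fun i => funext fun j => ?_)
  · simp only [updateSet_fst, Set.mem_singleton_iff]
    by_cases hiw : i = w <;> by_cases hiv : i = v
    · exact absurd (hiw ▸ hiv) hne.symm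
    · subst hiw; simp [hiv, fw]
    · subst hiv; simp [hiw, fv]
    · simp [hiw, hiv]
  · rw [updateSet_snd' w (net.updateSet {v} cfg) i j, updateSet_snd' v cfg i j,
      updateSet_snd' v (net.updateSet {w} cfg) i j, updateSet_snd' w cfg i j, fw, fv]
    by_cases h1 : (i = v ∧ (net.flip v cfg.1).2 j = true) ∨
        (j = v ∧ (net.flip v cfg.1).2 i = true) <;>
      by_cases h2 : (i = w ∧ (net.flip w cfg.1).2 j = true) ∨
        (j = w ∧ (net.flip w cfg.1).2 i = true) <;>
      simp [h1, h2]

lemma swap_lemma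
    (hloc : ∀ i (s s' : I → S), s i = s' i → (∀ u, net.G.Adj u i → s u = s' u) →
      net.flip i s = net.flip i s') :
    ∀ (l : List I) (cfg : FanConfig I S),
      (∀ i j, net.G.Adj i j → cfg.2 i j = !cfg.2 j i) →
      ∀ w, net.Applicable cfg w → net.ValidSeq cfg l → w ∉ l →
        net.ValidSeq (net.updateSet {w} cfg) l ∧
        net.run l (net.updateSet {w} cfg) = net.updateSet {w} (net.run l cfg) := by
  intro l
  induction l with
  | nil => intro cfg _ w hw _ _; exact ⟨trivial, rfl⟩
  | cons v t ih =>
    intro cfg hor w hw hval hmem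
    obtain ⟨hv, hval'⟩ := hval
    have hne : v ≠ w := by rintro rfl; exact hmem List.mem_cons_self
    have hvw : ¬ net.G.Adj v w := not_adj_of_app hor hv hw
    have hwv : ¬ net.G.Adj w v := fun h => hvw h.symm
    have hor' := hor_update v cfg hor
    have hw' : net.Applicable (net.updateSet {v} cfg) w :=
      app_update hne.symm hvw cfg hw
    have hcomm := update_comm hloc hor hv hw hne
    obtain ⟨ih1, ih2⟩ := ih (net.updateSet {v} cfg) hor' w hw' hval'
      (fun h => hmem (List.mem_cons_of_mem _ h))
    refine ⟨⟨app_update hne hwv cfg hv, ?_⟩, ?_⟩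
    · rw [← hcomm]; exact ih1
    · rw [run_cons, ← hcomm, ih2, run_cons]

lemma first_occ {α : Type*} {w : α} {l : List α} (h : w ∈ l) :
    ∃ a b, l = a ++ w :: b ∧ w ∉ a := by
  induction l with
  | nil => cases h
  | cons v t ih =>
    by_cases hvw : v = w
    · exact ⟨[], t, by rw [hvw]; rfl, by simp⟩
    · obtain ⟨a, b, rfl, hna⟩ := ih (by
        rcases List.mem_cons.mp h with h | h
        · exact absurd h.symm hvw
        · exact h)
      exact ⟨v :: a, b, rfl, by
        simp only [List.mem_cons, not_or]
        exact ⟨fun hh => hvw hh.symm, hna⟩⟩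

end FAN

/-- If two finite sequential update schedules consist of applicable-node updates and the
multisets of updated nodes are equal, then the resulting configurations are equal. -/
theorem fan_multiset_invariance {I S : Type*} (net : FAN I S)
    (hloc : ∀ i (s s' : I → S), s i = s' i → (∀ u, net.G.Adj u i → s u = s' u) →
      net.flip i s = net.flip i s')
    (hlf : ∀ v, (net.G.neighborSet v).Finite)
    (cfg : FanConfig I S)
    (hor : ∀ i j, net.G.Adj i j → cfg.2 i j = !cfg.2 j i)
    (l₁ l₂ : List I)
    (h₁ : net.ValidSeq cfg l₁) (h₂ : net.ValidSeq cfg l₂)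
    (hm : (l₁ : Multiset I) = (l₂ : Multiset I)) :
    net.run l₁ cfg = net.run l₂ cfg := by
  induction l₂ generalizing l₁ cfg with
  | nil =>
    have : l₁ = [] := by simpa using hm
    subst this; rfl
  | cons w t₂ ih =>
    obtain ⟨hw, h₂'⟩ := h₂
    have hwmem : w ∈ l₁ := by
      rw [← Multiset.mem_coe, hm]; simp
    obtain ⟨a, b, rfl, hna⟩ := FAN.first_occ hwmem
    rw [FAN.validSeq_append] at h₁
    obtain ⟨ha, hb⟩ := h₁
    obtain ⟨hwa, hb'⟩ := hb
    obtain ⟨s1, s2⟩ := FAN.swap_lemma hloc a cfg hor w hw ha hna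
    have hrun : net.run (a ++ w :: b) cfg = net.run (a ++ b) (net.updateSet {w} cfg) := by
      rw [FAN.run_append, FAN.run_append, FAN.run_cons, s2]
    have hvalid : net.ValidSeq (net.updateSet {w} cfg) (a ++ b) := by
      rw [FAN.validSeq_append]
      exact ⟨s1, by rw [s2]; exact hb'⟩
    have hm' : ((a ++ b : List I) : Multiset I) = (t₂ : Multiset I) := by
      have : ((a ++ w :: b : List I) : Multiset I) = w ::ₘ ((a ++ b : List I) : Multiset I) := by
        simp [Multiset.cons_swap]
      rw [this] at hm
      have hm2 : w ::ₘ ((a ++ b : List I) : Multiset I) = w ::ₘ (t₂ : Multiset I) := by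
        simpa using hm
      exact (Multiset.cons_inj_right w).mp hm2
    rw [hrun, FAN.run_cons]
    exact ih (net.updateSet {w} cfg) (FAN.hor_update w cfg hor) _ hvalid h₂' hm'
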